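/- In any orthomodular lattice, a ≡ b = (a →₁ b) ∩ (b →₁ a), where a ≡ b := (a∩b)∪(a'∩b') and a →₁ b := a' ∪ (a∩b). -/
import Mathlib


/-- An ortholattice as an algebra ⟨α, ', ∪, ∩⟩ with join `j` and
orthocomplement `c` primitive, and meet defined by De Morgan. -/
structure OrthoLattice (α : Type*) where
  j : α → α → α
  c : α → α
  j_comm : ∀ a b, j a b = j b a
  j_assoc : ∀ a b d, j (j a b) d = j a (j b d)
  c_invol : ∀ a, c (c a) = a
  j_top : ∀ a b, j a (j b (c b)) = j b (c b)
  absorb : ∀ a b, j a (c (j (c a) (c b))) = a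

namespace OrthoLattice

variable {α : Type*}

/-- meet: a ∩ b = (a' ∪ b')' -/
def m (L : OrthoLattice α) (a b : α) : α := L.c (L.j (L.c a) (L.c b))

/-- the unit 1 = a ∪ a' -/
def one (L : OrthoLattice α) (a : α) : α := L.j a (L.c a)

/-- quantum equivalence a ≡ b = (a∩b) ∪ (a'∩b') -/
def equiv (L : OrthoLattice α) (a b : α) : α := L.j (L.m a b) (L.m (L.c a) (L.c b))

/-- classical equivalence a ≡₀ b = (a'∪b) ∩ (a∪b') -/
def equiv0 (L : OrthoLattice α) (a b : α) : α := L.m (L.j (L.c a) b) (L.j a (L.c b))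

/-- Sasaki hook a →₁ b = a' ∪ (a ∩ b) -/
def sasaki (L : OrthoLattice α) (a b : α) : α := L.j (L.c a) (L.m a b)

end OrthoLattice

namespace OrthoLattice

variable {α : Type*} (L : OrthoLattice α)

/-- the induced order -/
def le (a b : α) : Prop := L.j a b = b

theorem m_comm (a b : α) : L.m a b = L.m b a := by
  unfold m; rw [L.j_comm]

theorem dual_absorb (a b : α) : L.m a (L.j a b) = a := by
  have h := L.absorb (L.c a) (L.c b)
  rw [L.c_invol, L.c_invol] at h
  unfold m
  rw [h, L.c_invol]

theorem j_idem (a : α) : L.j a a = a := by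
  have h := L.absorb a (L.j a a)
  have h2 := L.dual_absorb a a
  unfold m at h2
  rw [h2] at h
  exact h

theorem m_idem (a : α) : L.m a a = a := by
  unfold m; rw [L.j_idem, L.c_invol]

theorem m_assoc (a b d : α) : L.m (L.m a b) d = L.m a (L.m b d) := by
  unfold m; rw [L.c_invol, L.c_invol, L.j_assoc]

theorem le_refl (a : α) : L.le a a := L.j_idem a

theorem le_trans {a b d : α} (h1 : L.le a b) (h2 : L.le b d) : L.le a d := by
  unfold le at *
  rw [← h2, ← L.j_assoc, h1]

theorem le_antisymm {a b : α} (h1 : L.le a b) (h2 : L.le b a) : a = b := by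
  unfold le at *
  rw [← h1, L.j_comm, h2]

theorem le_j_left (a b : α) : L.le a (L.j a b) := by
  unfold le; rw [← L.j_assoc, L.j_idem]

theorem le_j_right (a b : α) : L.le b (L.j a b) := by
  rw [L.j_comm]; exact L.le_j_left b a

theorem j_le {a b d : α} (h1 : L.le a d) (h2 : L.le b d) : L.le (L.j a b) d := by
  unfold le at *
  rw [L.j_assoc, h2, h1]

theorem c_anti {a b : α} (h : L.le a b) : L.le (L.c b) (L.c a) := by
  unfold le at *
  have hm : L.m a b = a := by
    rw [← h]; exact L.dual_absorb a b
  have : L.c (L.m a b) = L.c a := by rw [hm]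
  unfold m at this
  rw [L.c_invol] at this
  rw [L.j_comm]; exact this

theorem m_le_left (a b : α) : L.le (L.m a b) a := by
  have h := L.c_anti (L.le_j_left (L.c a) (L.c b))
  rw [L.c_invol] at h
  exact h

theorem m_le_right (a b : α) : L.le (L.m a b) b := by
  rw [L.m_comm]; exact L.m_le_left b a

theorem le_m {a b d : α} (h1 : L.le d a) (h2 : L.le d b) : L.le d (L.m a b) := by
  have h := L.c_anti (L.j_le (L.c_anti h1) (L.c_anti h2))
  rw [L.c_invol] at h
  exact h

theorem le_one (a b : α) : L.le a (L.one b) := L.j_top a b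

theorem m_c_eq (x : α) : L.m x (L.c x) = L.c (L.one x) := by
  unfold m one; rw [L.c_invol, L.j_comm]

theorem bot_le (x a : α) : L.le (L.m x (L.c x)) a := by
  rw [L.m_c_eq]
  have h := L.c_anti (L.le_one (L.c a) x)
  rw [L.c_invol] at h
  exact h

theorem j_bot (x a : α) : L.j a (L.m x (L.c x)) = a := by
  rw [L.j_comm]; exact L.bot_le x a

theorem om_le (hOM : ∀ a b : α, L.j a (L.m (L.c a) (L.j a b)) = L.j a b)
    {a x : α} (h : L.le a x) : L.j a (L.m (L.c a) x) = x := by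
  have h2 := hOM a x
  unfold le at h
  rw [h] at h2
  exact h2

theorem dual_om (hOM : ∀ a b : α, L.j a (L.m (L.c a) (L.j a b)) = L.j a b)
    {a x : α} (h : L.le x a) : L.m a (L.j (L.c a) x) = x := by
  have h1 : L.le (L.c a) (L.c x) := L.c_anti h
  have h2 := L.om_le hOM h1
  rw [L.c_invol] at h2
  -- h2 : L.j (L.c a) (L.m a (L.c x)) = L.c x
  have h3 : L.c (L.j (L.c a) (L.m a (L.c x))) = x := by rw [h2, L.c_invol]
  have h4 : L.m a (L.j (L.c a) x) = L.c (L.j (L.c a) (L.m a (L.c x))) := by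
    unfold m
    rw [L.c_invol]
  rw [h4, h3]

end OrthoLattice

/-- in any orthomodular lattice, a ≡ b = (a →₁ b) ∩ (b →₁ a). -/
theorem stmt8 {α : Type*} (L : OrthoLattice α)
    (hOM : ∀ a b : α, L.j a (L.m (L.c a) (L.j a b)) = L.j a b) :
    ∀ a b : α, L.equiv a b = L.m (L.sasaki a b) (L.sasaki b a) := by
  intro a b
  set x := L.m a b with hxdef
  have hx_a : L.le x a := L.m_le_left a b
  have hx_b : L.le x b := L.m_le_right a b
  set p := L.j (L.c a) x with hpdef
  set q := L.j (L.c b) x with hqdef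
  have hsas : L.m (L.sasaki a b) (L.sasaki b a) = L.m p q := by
    unfold OrthoLattice.sasaki
    rw [L.m_comm b a]
  have hx_p : L.le x p := L.le_j_right (L.c a) x
  have hx_q : L.le x q := L.le_j_right (L.c b) x
  have hx_pq : L.le x (L.m p q) := L.le_m hx_p hx_q
  have step3 : L.j x (L.m (L.c x) (L.m p q)) = L.m p q := L.om_le hOM hx_pq
  -- step4 : x' ∩ p = a'
  have hap : L.m a p = x := L.dual_om hOM hx_a
  have hbq : L.m b q = x := L.dual_om hOM hx_b
  have hca_cx : L.le (L.c a) (L.c x) := L.c_anti hx_a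
  have hcb_cx : L.le (L.c b) (L.c x) := L.c_anti hx_b
  have hca_p : L.le (L.c a) p := L.le_j_left (L.c a) x
  have hcb_q : L.le (L.c b) q := L.le_j_left (L.c b) x
  have step4 : L.m (L.c x) p = L.c a := by
    have h1 : L.le (L.c a) (L.m (L.c x) p) := L.le_m hca_cx hca_p
    have h2 := L.om_le hOM h1
    rw [L.c_invol] at h2
    -- h2 : j (c a) (m a (m (c x) p)) = m (c x) p
    have h3 : L.m a (L.m (L.c x) p) = L.m x (L.c x) := by
      rw [L.m_comm (L.c x) p, ← L.m_assoc, hap]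
    rw [h3, L.j_bot] at h2
    exact h2.symm
  have step5 : L.m (L.c x) q = L.c b := by
    have h1 : L.le (L.c b) (L.m (L.c x) q) := L.le_m hcb_cx hcb_q
    have h2 := L.om_le hOM h1
    rw [L.c_invol] at h2
    have h3 : L.m b (L.m (L.c x) q) = L.m x (L.c x) := by
      rw [L.m_comm (L.c x) q, ← L.m_assoc, hbq]
    rw [h3, L.j_bot] at h2
    exact h2.symm
  have step6 : L.m (L.c x) (L.m p q) = L.m (L.c a) (L.c b) := by
    apply L.le_antisymm
    · set w := L.m (L.c x) (L.m p q) with hwdef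
      have hw_cx : L.le w (L.c x) := L.m_le_left _ _
      have hw_pq : L.le w (L.m p q) := L.m_le_right _ _
      have hw_p : L.le w p := L.le_trans hw_pq (L.m_le_left p q)
      have hw_q : L.le w q := L.le_trans hw_pq (L.m_le_right p q)
      have hw_ca : L.le w (L.c a) := by
        rw [← step4]; exact L.le_m hw_cx hw_p
      have hw_cb : L.le w (L.c b) := by
        rw [← step5]; exact L.le_m hw_cx hw_q
      exact L.le_m hw_ca hw_cb
    · set v := L.m (L.c a) (L.c b) with hvdef
      have hv_ca : L.le v (L.c a) := L.m_le_left _ _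
      have hv_cb : L.le v (L.c b) := L.m_le_right _ _
      have hv_cx : L.le v (L.c x) := L.le_trans hv_ca hca_cx
      have hv_p : L.le v p := L.le_trans hv_ca hca_p
      have hv_q : L.le v q := L.le_trans hv_cb hcb_q
      exact L.le_m hv_cx (L.le_m hv_p hv_q)
  rw [hsas]
  unfold OrthoLattice.equiv
  rw [← hxdef, ← step6, step3]
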